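/- Let n ≥ 3 be an integer and s > 1. Then ∫ from 1 to s of dz/√(1 - z^{-(n-2)}) = (s-1)/√(1 - s^{-(n-2)}) + ∫ from (1 - s^{-(n-2)})^{-1/2} to ∞ of ((1 - y^{-2})^{-1/(n-2)} - 1) dy. -/

import Mathlib

open Set MeasureTheory Filter intervalIntegral

namespace IntInv

noncomputable def ww (m : ℕ) (z : ℝ) : ℝ := 1 - (z ^ m)⁻¹
noncomputable def ff (m : ℕ) (z : ℝ) : ℝ := 1 / Real.sqrt (1 - (z ^ m)⁻¹)
noncomputable def yy (m : ℕ) (z : ℝ) : ℝ := (1 - (z ^ m)⁻¹) ^ (-(1 : ℝ) / 2)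
noncomputable def hh (m : ℕ) (t : ℝ) : ℝ := (1 - t ^ (-2 : ℝ)) ^ (-(1 : ℝ) / (m : ℝ)) - 1

variable {m : ℕ} {s z t a : ℝ}

lemma ww_pos (hm : m ≠ 0) (hz : 1 < z) : 0 < ww m z := by
  have h1 : (1 : ℝ) < z ^ m := one_lt_pow₀ hz hm
  have : (z ^ m)⁻¹ < 1 := inv_lt_one_of_one_lt₀ h1
  simpa [ww] using sub_pos.mpr this

lemma ww_lt_one (hz : 0 < z) : ww m z < 1 :=
  sub_lt_self _ (inv_pos.mpr (pow_pos hz m))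

lemma one_div_sqrt_eq {x : ℝ} (hx : 0 < x) : 1 / Real.sqrt x = x ^ (-(1 : ℝ) / 2) := by
  rw [show (-(1 : ℝ) / 2) = -(1 / 2) by ring, Real.rpow_neg hx.le, ← Real.sqrt_eq_rpow, one_div]

lemma ff_eq_yy (hm : m ≠ 0) (hz : 1 < z) : ff m z = yy m z := by
  have hw := ww_pos hm hz
  simp only [ww] at hw
  rw [ff, yy, ← one_div_sqrt_eq hw]

lemma yy_gt_one (hm : m ≠ 0) (hz : 1 < z) : 1 < yy m z := by
  have hw := ww_pos hm hz
  have hw1 : ww m z < 1 := ww_lt_one (lt_trans one_pos hz)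
  exact (Real.one_lt_rpow_iff_of_pos hw).mpr (Or.inr ⟨hw1, by norm_num⟩)

lemma rpow_neg_two_eq {x : ℝ} (hx : 0 < x) : x ^ (-2 : ℝ) = (x ^ (2 : ℕ))⁻¹ := by
  rw [show (-2 : ℝ) = -((2 : ℕ) : ℝ) by norm_num, Real.rpow_neg hx.le, Real.rpow_natCast]

lemma yy_sq_inv (hm : m ≠ 0) (hz : 1 < z) : (yy m z) ^ (-2 : ℝ) = ww m z := by
  have hw := ww_pos hm hz
  simp only [ww] at hw ⊢
  rw [yy, ← Real.rpow_mul hw.le]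
  norm_num


lemma hh_yy (hm : m ≠ 0) (hz : 1 < z) : hh m (yy m z) = z - 1 := by
  have hz0 : (0 : ℝ) < z := lt_trans one_pos hz
  have hmR : ((m : ℝ)) ≠ 0 := Nat.cast_ne_zero.mpr hm
  rw [hh, yy_sq_inv hm hz]
  have h1 : 1 - ww m z = (z ^ m)⁻¹ := by simp [ww]
  rw [h1, ← Real.rpow_natCast z m, ← Real.rpow_neg hz0.le, ← Real.rpow_mul hz0.le]
  rw [show -(m : ℝ) * (-(1 : ℝ) / (m : ℝ)) = 1 by field_simp, Real.rpow_one]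

lemma contAt_ww (hz : z ≠ 0) : ContinuousAt (ww m) z :=
  continuousAt_const.sub ((continuousAt_id.pow m).inv₀ (pow_ne_zero m hz))

lemma contAt_ff (hm : m ≠ 0) (hz : 1 < z) : ContinuousAt (ff m) z := by
  have hw := ww_pos hm hz
  simp only [ww] at hw
  have h1 : ContinuousAt (fun u : ℝ => 1 - (u ^ m)⁻¹) z := contAt_ww (lt_trans one_pos hz).ne'
  exact continuousAt_const.div (Real.continuous_sqrt.continuousAt.comp h1)
    (Real.sqrt_ne_zero'.mpr hw)

lemma contAt_hh (hm : m ≠ 0) (ht : 1 < t) : ContinuousAt (hh m) t := by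
  have ht0 : (0 : ℝ) < t := lt_trans one_pos ht
  have h1 : ContinuousAt (fun u : ℝ => 1 - u ^ (-2 : ℝ)) t :=
    continuousAt_const.sub (Real.continuousAt_rpow_const t _ (Or.inl ht0.ne'))
  have h2 : (1 : ℝ) - t ^ (-2 : ℝ) ≠ 0 := by
    have := Real.rpow_lt_one_of_one_lt_of_neg ht (by norm_num : (-2 : ℝ) < 0)
    linarith
  exact (h1.rpow_const (Or.inl h2)).sub continuousAt_const

lemma hasDerivAt_yy (hm : m ≠ 0) (hz : 1 < z) : ∃ d, HasDerivAt (yy m) d z := by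
  have hz0 : z ≠ 0 := (lt_trans one_pos hz).ne'
  have hw := ww_pos hm hz
  simp only [ww] at hw
  have h1 : HasDerivAt (fun u : ℝ => 1 - (u ^ m)⁻¹) _ z :=
    ((hasDerivAt_pow m z).inv (pow_ne_zero m hz0)).const_sub 1
  exact ⟨_, h1.rpow_const (Or.inl hw.ne')⟩

lemma intInt_ff (hm : m ≠ 0) (ha : 1 < a) {b : ℝ} (hb : 1 < b) :
    IntervalIntegrable (ff m) volume a b := by
  apply ContinuousOn.intervalIntegrable
  intro x hx
  exact (contAt_ff hm (lt_of_lt_of_le (lt_min ha hb) hx.1)).continuousWithinAt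

lemma intInt_hh (hm : m ≠ 0) (ha : 1 < a) {b : ℝ} (hb : 1 < b) :
    IntervalIntegrable (hh m) volume a b := by
  apply ContinuousOn.intervalIntegrable
  intro x hx
  exact (contAt_hh hm (lt_of_lt_of_le (lt_min ha hb) hx.1)).continuousWithinAt

lemma ff_nonneg : 0 ≤ ff m z := by
  rw [ff]; positivity

lemma ff_le (hm : m ≠ 0) (hz1 : 1 < z) (hzs : z ≤ s) :
    ff m z ≤ Real.sqrt (s ^ m) / Real.sqrt (z - 1) := by
  have hz0 : (0 : ℝ) < z := lt_trans one_pos hz1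
  have hs0 : (0 : ℝ) < s := lt_trans one_pos (lt_of_lt_of_le hz1 hzs)
  have hzm : z ≤ z ^ m := le_self_pow₀ hz1.le hm
  have hsm : z ^ m ≤ s ^ m := pow_le_pow_left₀ hz0.le hzs m
  have hzmpos : (0 : ℝ) < z ^ m := pow_pos hz0 m
  have hsmpos : (0 : ℝ) < s ^ m := pow_pos hs0 m
  have hwpos : (0 : ℝ) < 1 - (z ^ m)⁻¹ := by
    have := ww_pos hm hz1 (m := m); simpa [ww] using this
  have h1 : z - 1 ≤ (1 - (z ^ m)⁻¹) * s ^ m := by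
    have heq : 1 - (z ^ m)⁻¹ = (z ^ m - 1) / z ^ m := by field_simp
    rw [heq, div_mul_eq_mul_div, le_div_iff₀ hzmpos]
    nlinarith
  have key : Real.sqrt (z - 1) ≤ Real.sqrt (s ^ m) * Real.sqrt (1 - (z ^ m)⁻¹) := by
    rw [← Real.sqrt_mul hsmpos.le]
    apply Real.sqrt_le_sqrt; linarith [h1, mul_comm (1 - (z ^ m)⁻¹) (s ^ m)]
  rw [ff, div_le_div_iff₀ (Real.sqrt_pos.mpr hwpos) (Real.sqrt_pos.mpr (by linarith)), one_mul]
  calc Real.sqrt (z - 1) ≤ Real.sqrt (s ^ m) * Real.sqrt (1 - (z ^ m)⁻¹) := key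
    _ = Real.sqrt (s ^ m) * Real.sqrt (1 - (z ^ m)⁻¹) := rfl

lemma measurable_ff : Measurable (ff m) := by
  unfold ff
  exact measurable_const.div
    (Real.continuous_sqrt.measurable.comp ((measurable_id.pow_const m).inv.const_sub 1))

lemma measurable_hh : Measurable (hh m) := by
  unfold hh
  fun_prop

lemma intInt_ff_one (hm : m ≠ 0) {s : ℝ} (hs : 1 < s) :
    IntervalIntegrable (ff m) volume 1 s := by
  rw [intervalIntegrable_iff_integrableOn_Ioc_of_le hs.le]
  have hb0 : IntervalIntegrable (fun x : ℝ => x ^ (-(1 : ℝ) / 2)) volume 0 (s - 1) :=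
    intervalIntegrable_rpow' (by norm_num)
  have hb1 : IntervalIntegrable (fun x : ℝ => (x - 1) ^ (-(1 : ℝ) / 2)) volume 1 s := by
    have := hb0.comp_sub_right 1
    rw [show (0:ℝ) + 1 = 1 by norm_num, show s - 1 + 1 = s by ring] at this
    exact this
  have hb2 : IntervalIntegrable
      (fun x : ℝ => Real.sqrt (s ^ m) * (x - 1) ^ (-(1 : ℝ) / 2)) volume 1 s :=
    hb1.const_mul _
  rw [intervalIntegrable_iff_integrableOn_Ioc_of_le hs.le] at hb2
  apply hb2.mono' (measurable_ff.aestronglyMeasurable.restrict)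
  rw [ae_restrict_iff' measurableSet_Ioc]
  filter_upwards with z hz
  have hz1 : 1 < z := hz.1
  rw [Real.norm_of_nonneg ff_nonneg]
  calc ff m z ≤ Real.sqrt (s ^ m) / Real.sqrt (z - 1) := ff_le hm hz1 hz.2
    _ = Real.sqrt (s ^ m) * (z - 1) ^ (-(1 : ℝ) / 2) := by
        rw [div_eq_mul_one_div, one_div_sqrt_eq (by linarith)]

lemma hh_nonneg (hm : m ≠ 0) (ht : 1 < t) : 0 ≤ hh m t := by
  have ht0 : (0 : ℝ) < t := lt_trans one_pos ht
  have hq1 : t ^ (-2 : ℝ) < 1 := Real.rpow_lt_one_of_one_lt_of_neg ht (by norm_num)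
  have hq0 : 0 < t ^ (-2 : ℝ) := Real.rpow_pos_of_pos ht0 _
  have hbase : 0 < 1 - t ^ (-2 : ℝ) := by linarith
  have h1 : (1 - t ^ (-2 : ℝ)) ^ (0 : ℝ) ≤ (1 - t ^ (-2 : ℝ)) ^ (-(1 : ℝ) / (m : ℝ)) := by
    apply Real.rpow_le_rpow_of_exponent_ge hbase (by linarith)
    rw [neg_div]
    exact neg_nonpos.mpr (by positivity)
  rw [Real.rpow_zero] at h1
  simp only [hh]; linarith

lemma hh_le (hm : m ≠ 0) {s : ℝ} (hs : 1 < s) (ht : yy m s < t) :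
    hh m t ≤ s ^ m * t ^ (-2 : ℝ) := by
  have hY1 : 1 < yy m s := yy_gt_one hm hs
  have ht1 : 1 < t := lt_trans hY1 ht
  have ht0 : (0 : ℝ) < t := lt_trans one_pos ht1
  have hY0 : (0 : ℝ) < yy m s := lt_trans one_pos hY1
  have hs0 : (0 : ℝ) < s := lt_trans one_pos hs
  have hsmpos : (0 : ℝ) < s ^ m := pow_pos hs0 m
  set q := t ^ (-2 : ℝ) with hqdef
  have hq0 : 0 < q := Real.rpow_pos_of_pos ht0 _
  -- q ≤ ww m s
  have hqle : q ≤ ww m s := by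
    rw [← yy_sq_inv hm hs, hqdef, rpow_neg_two_eq ht0, rpow_neg_two_eq hY0]
    exact inv_anti₀ (pow_pos hY0 2) (pow_le_pow_left₀ hY0.le ht.le 2)
  have hws : ww m s = 1 - (s ^ m)⁻¹ := rfl
  have hbase : (s ^ m)⁻¹ ≤ 1 - q := by
    rw [hws] at hqle; linarith
  have hbasepos : (0 : ℝ) < 1 - q := lt_of_lt_of_le (inv_pos.mpr hsmpos) hbase
  have hbase1 : 1 - q ≤ 1 := by linarith
  have hm1 : (1 : ℝ) ≤ m := by exact_mod_cast Nat.one_le_iff_ne_zero.mpr hm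
  have hexp : (-1 : ℝ) ≤ -(1 : ℝ) / (m : ℝ) := by
    rw [neg_div]
    exact neg_le_neg (div_le_one_of_le₀ hm1 (by positivity))
  have h1 : (1 - q) ^ (-(1 : ℝ) / (m : ℝ)) ≤ (1 - q) ^ (-1 : ℝ) :=
    Real.rpow_le_rpow_of_exponent_ge hbasepos hbase1 hexp
  rw [Real.rpow_neg_one] at h1
  have h2 : (1 - q)⁻¹ - 1 = q / (1 - q) := by field_simp; ring
  have h3 : q / (1 - q) ≤ q / (s ^ m)⁻¹ :=
    div_le_div_of_nonneg_left hq0.le (inv_pos.mpr hsmpos) hbase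
  have h4 : q / (s ^ m)⁻¹ = s ^ m * q := by field_simp [mul_comm]
  simp only [hh]
  linarith

lemma intOn_hh (hm : m ≠ 0) {s : ℝ} (hs : 1 < s) :
    IntegrableOn (hh m) (Ioi (yy m s)) := by
  have hY1 : 1 < yy m s := yy_gt_one hm hs
  have hY0 : (0 : ℝ) < yy m s := lt_trans one_pos hY1
  have hb : IntegrableOn (fun t : ℝ => s ^ m * t ^ (-2 : ℝ)) (Ioi (yy m s)) :=
    (integrableOn_Ioi_rpow_of_lt (by norm_num) hY0).const_mul _
  apply hb.mono' (measurable_hh.aestronglyMeasurable.restrict)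
  rw [ae_restrict_iff' measurableSet_Ioi]
  filter_upwards with t ht
  rw [Real.norm_of_nonneg (hh_nonneg hm (lt_trans hY1 ht))]
  exact hh_le hm hs ht

-- y(a) → ∞ as a → 1⁺
lemma tendsto_yy_atTop (hm : m ≠ 0) : Tendsto (yy m) (nhdsWithin 1 (Ioi 1)) atTop := by
  have hw0 : ww m 1 = 0 := by simp [ww]
  have hwt : Tendsto (ww m) (nhdsWithin 1 (Ioi 1)) (nhdsWithin 0 (Ioi 0)) := by
    apply tendsto_nhdsWithin_of_tendsto_nhds_of_eventually_within
    · have := (contAt_ww (m := m) (z := 1) one_ne_zero).tendsto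
      rw [hw0] at this
      exact this.mono_left nhdsWithin_le_nhds
    · filter_upwards [self_mem_nhdsWithin] with a ha
      exact ww_pos hm ha
  have hsq : Tendsto (fun x : ℝ => Real.sqrt x) (nhdsWithin 0 (Ioi 0)) (nhdsWithin 0 (Ioi 0)) := by
    apply tendsto_nhdsWithin_of_tendsto_nhds_of_eventually_within
    · have := Real.continuous_sqrt.tendsto 0
      rw [Real.sqrt_zero] at this
      exact this.mono_left nhdsWithin_le_nhds
    · filter_upwards [self_mem_nhdsWithin] with x hx
      exact Real.sqrt_pos.mpr hx
  have hinv : Tendsto (fun x : ℝ => (Real.sqrt x)⁻¹) (nhdsWithin 0 (Ioi 0)) atTop :=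
    tendsto_inv_nhdsGT_zero.comp hsq
  have hcomp : Tendsto (fun a => (Real.sqrt (ww m a))⁻¹) (nhdsWithin 1 (Ioi 1)) atTop :=
    hinv.comp hwt
  apply hcomp.congr'
  filter_upwards [self_mem_nhdsWithin] with a ha
  rw [← one_div]
  exact ff_eq_yy hm ha

lemma hasDerivAt_F (hm : m ≠ 0) {s : ℝ} (hs : 1 < s) {a : ℝ} (ha : 1 < a) :
    HasDerivAt (fun u => (∫ z in u..s, ff m z) + (u - 1) * yy m u
      - ∫ t in (yy m s)..(yy m u), hh m t) 0 a := by
  have hYs : 1 < yy m s := yy_gt_one hm hs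
  have hYa : 1 < yy m a := yy_gt_one hm ha
  obtain ⟨d, hd⟩ := hasDerivAt_yy hm ha
  have h1 : HasDerivAt (fun u => ∫ z in u..s, ff m z) (-(ff m a)) a :=
    intervalIntegral.integral_hasDerivAt_left (intInt_ff hm ha hs)
      (ContinuousAt.stronglyMeasurableAtFilter isOpen_Ioi
        (fun x hx => contAt_ff hm hx) a ha)
      (contAt_ff hm ha)
  have h2 : HasDerivAt (fun u : ℝ => (u - 1) * yy m u) (1 * yy m a + (a - 1) * d) a :=
    ((hasDerivAt_id a).sub_const 1).mul hd
  have hG : HasDerivAt (fun t => ∫ u in (yy m s)..t, hh m u) (hh m (yy m a)) (yy m a) :=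
    intervalIntegral.integral_hasDerivAt_right (intInt_hh hm hYs hYa)
      (ContinuousAt.stronglyMeasurableAtFilter isOpen_Ioi
        (fun x hx => contAt_hh hm hx) _ hYa)
      (contAt_hh hm hYa)
  have h3 : HasDerivAt (fun u => ∫ t in (yy m s)..(yy m u), hh m t)
      (hh m (yy m a) * d) a := HasDerivAt.comp a hG hd
  have h4 := (h1.add h2).sub h3
  have hval : -(ff m a) + (1 * yy m a + (a - 1) * d) - hh m (yy m a) * d = 0 := by
    rw [ff_eq_yy hm ha, hh_yy hm ha]; ring
  rw [hval] at h4
  exact h4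

lemma key (m : ℕ) (hm : m ≠ 0) (s : ℝ) (hs : 1 < s) :
    (∫ z in (1 : ℝ)..s, 1 / Real.sqrt (1 - (z ^ m)⁻¹))
      = (s - 1) / Real.sqrt (1 - (s ^ m)⁻¹)
        + ∫ y in Set.Ioi ((1 - (s ^ m)⁻¹ : ℝ) ^ (-(1 : ℝ) / 2)),
            ((1 - y ^ (-2 : ℝ)) ^ (-(1 : ℝ) / (m : ℝ)) - 1) := by
  have hYs : 1 < yy m s := yy_gt_one hm hs
  set F : ℝ → ℝ := fun u => (∫ z in u..s, ff m z) + (u - 1) * yy m u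
      - ∫ t in (yy m s)..(yy m u), hh m t with hF
  set L := nhdsWithin (1 : ℝ) (Ioi 1) with hL
  -- F is constant = (s-1) * yy m s on (1, s]
  have hFs : F s = (s - 1) * yy m s := by
    simp [hF, intervalIntegral.integral_same]
  have hconst : ∀ a ∈ Ioo (1 : ℝ) s, F a = (s - 1) * yy m s := by
    intro a ha
    rw [← hFs]
    have hcont : ContinuousOn F (Icc a s) := fun x hx =>
      (hasDerivAt_F hm hs (lt_of_lt_of_le ha.1 hx.1)).continuousAt.continuousWithinAt
    have hderiv : ∀ x ∈ Ico a s, HasDerivWithinAt F 0 (Ici x) x := fun x hx =>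
      (hasDerivAt_F hm hs (lt_of_lt_of_le ha.1 hx.1)).hasDerivWithinAt
    exact (constant_of_has_deriv_right_zero hcont hderiv s
      (right_mem_Icc.mpr ha.2.le)).symm
  -- Limits
  have T1 : Tendsto (fun a => ∫ z in a..s, ff m z) L
      (nhds (∫ z in (1 : ℝ)..s, ff m z)) := by
    have hint : IntervalIntegrable (ff m) volume 1 s := intInt_ff_one hm hs
    have hcp : ContinuousOn (fun b => ∫ x in s..b, ff m x) (uIcc 1 s) :=
      intervalIntegral.continuousOn_primitive_interval' hint right_mem_uIcc
    have h0 := ((hcp 1 left_mem_uIcc).tendsto).neg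
    rw [← intervalIntegral.integral_symm] at h0
    have hle : L ≤ nhdsWithin (1 : ℝ) (uIcc 1 s) := by
      rw [hL, ← nhdsWithin_Ioc_eq_nhdsGT hs]
      exact nhdsWithin_mono 1 (by rw [uIcc_of_le hs.le]; exact Ioc_subset_Icc_self)
    have := h0.mono_left hle
    apply this.congr
    intro a
    rw [← intervalIntegral.integral_symm]
  have T2 : Tendsto (fun a => (a - 1) * yy m a) L (nhds 0) := by
    apply squeeze_zero' (g := fun a => Real.sqrt (s ^ m) * Real.sqrt (a - 1))
    · filter_upwards [self_mem_nhdsWithin] with a ha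
      have : 1 < yy m a := yy_gt_one hm ha
      have : 0 < yy m a := lt_trans one_pos this
      have : (0:ℝ) ≤ a - 1 := by simp only [mem_Ioi] at ha; linarith
      positivity
    · have hmem : Ioo (1 : ℝ) s ∈ L := by
        rw [hL]; exact Ioo_mem_nhdsGT hs
      filter_upwards [hmem] with a ha
      have ha1 : 1 < a := ha.1
      have hb := ff_le hm ha1 ha.2.le
      rw [ff_eq_yy hm ha1] at hb
      calc (a - 1) * yy m a ≤ (a - 1) * (Real.sqrt (s ^ m) / Real.sqrt (a - 1)) := by
            apply mul_le_mul_of_nonneg_left hb (by linarith)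
        _ = Real.sqrt (s ^ m) * ((a - 1) / Real.sqrt (a - 1)) := by ring
        _ = Real.sqrt (s ^ m) * Real.sqrt (a - 1) := by rw [Real.div_sqrt]
    · have hc : Tendsto (fun a : ℝ => Real.sqrt (s ^ m) * Real.sqrt (a - 1)) (nhds 1)
          (nhds (Real.sqrt (s ^ m) * Real.sqrt (1 - 1))) := by
        apply Tendsto.const_mul
        exact (Real.continuous_sqrt.tendsto _).comp ((continuous_id.sub continuous_const).tendsto 1)
      rw [show (1:ℝ) - 1 = 0 by ring, Real.sqrt_zero, mul_zero] at hc
      exact hc.mono_left nhdsWithin_le_nhds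
  have T3 : Tendsto (fun a => ∫ t in (yy m s)..(yy m a), hh m t) L
      (nhds (∫ t in Ioi (yy m s), hh m t)) :=
    MeasureTheory.intervalIntegral_tendsto_integral_Ioi _ (intOn_hh hm hs) (tendsto_yy_atTop hm)
  have TF : Tendsto F L (nhds ((∫ z in (1 : ℝ)..s, ff m z) + 0
      - ∫ t in Ioi (yy m s), hh m t)) := (T1.add T2).sub T3
  have TC : Tendsto F L (nhds ((s - 1) * yy m s)) := by
    have hmem : Ioo (1 : ℝ) s ∈ L := by
      rw [hL]; exact Ioo_mem_nhdsGT hs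
    have heq : (fun _ : ℝ => (s - 1) * yy m s) =ᶠ[L] F := by
      filter_upwards [hmem] with a ha
      exact (hconst a ha).symm
    exact Tendsto.congr' heq tendsto_const_nhds
  have hNe : L.NeBot := by rw [hL]; exact nhdsGT_neBot 1
  have hmain := tendsto_nhds_unique TF TC
  -- Translate back
  have e1 : (∫ z in (1 : ℝ)..s, 1 / Real.sqrt (1 - (z ^ m)⁻¹)) = ∫ z in (1 : ℝ)..s, ff m z := rfl
  have e2 : (s - 1) / Real.sqrt (1 - (s ^ m)⁻¹) = (s - 1) * yy m s := by
    rw [div_eq_mul_one_div]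
    congr 1
    have := ff_eq_yy hm hs (m := m)
    rw [ff] at this
    exact this
  have e3 : (∫ y in Set.Ioi ((1 - (s ^ m)⁻¹ : ℝ) ^ (-(1 : ℝ) / 2)),
      ((1 - y ^ (-2 : ℝ)) ^ (-(1 : ℝ) / (m : ℝ)) - 1)) = ∫ t in Ioi (yy m s), hh m t := rfl
  rw [e1, e2, e3]
  linarith

end IntInv


/-- Integral identity obtained by inverting `z ↦ (1 - z^{-(n-2)})^{-1/2}`:
`∫₁^s dz/√(1 - z^{-(n-2)}) = (s-1)/√(1 - s^{-(n-2)})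
  + ∫_{(1 - s^{-(n-2)})^{-1/2}}^∞ ((1 - y⁻²)^{-1/(n-2)} - 1) dy`. -/
theorem integral_inversion_identity (n : ℕ) (hn : 3 ≤ n) (s : ℝ) (hs : 1 < s) :
    (∫ z in (1 : ℝ)..s, 1 / Real.sqrt (1 - (z ^ (n - 2))⁻¹))
      = (s - 1) / Real.sqrt (1 - (s ^ (n - 2))⁻¹)
        + ∫ y in Set.Ioi ((1 - (s ^ (n - 2))⁻¹ : ℝ) ^ (-(1 : ℝ) / 2)),
            ((1 - y ^ (-2 : ℝ)) ^ (-(1 : ℝ) / ((n : ℝ) - 2)) - 1) := by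
  have hm : n - 2 ≠ 0 := by omega
  have hcast : ((n - 2 : ℕ) : ℝ) = (n : ℝ) - 2 := by
    rw [Nat.cast_sub (by omega : 2 ≤ n)]; norm_num
  rw [← hcast]
  exact IntInv.key (n - 2) hm s hs
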